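/- Let m be a positive integer and let a_1, ..., a_m be nonnegative real numbers with a_1 > 0. Then the sum over i from 1 to m of a_i / (a_1 + a_2 + ... + a_i) is at most 1 + ln((a_1 + ... + a_m) / a_1). -/

import Mathlib

lemma aux_prefix_sum (b : ℕ → ℝ) (hb : ∀ i, 0 ≤ b i) (h0 : 0 < b 0) :
    ∀ n, 0 < n →
      ∑ i ∈ Finset.range n, b i / (∑ j ∈ Finset.range (i+1), b j) ≤
        1 + Real.log ((∑ i ∈ Finset.range n, b i) / b 0) := by
  have hS : ∀ n, 0 < n → 0 < ∑ i ∈ Finset.range n, b i := by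
    intro n hn
    calc 0 < b 0 := h0
    _ ≤ ∑ i ∈ Finset.range n, b i :=
      Finset.single_le_sum (fun i _ => hb i) (Finset.mem_range.2 hn)
  intro n hn
  induction n with
  | zero => omega
  | succ n ih =>
    rcases Nat.eq_zero_or_pos n with rfl | hn'
    · simp [div_self h0.ne']
    have hSn := hS n hn'
    have hSn1 := hS (n+1) (Nat.succ_pos n)
    rw [Finset.sum_range_succ]
    have key : b n / (∑ j ∈ Finset.range (n+1), b j) ≤
        Real.log ((∑ i ∈ Finset.range (n+1), b i) / b 0) -
        Real.log ((∑ i ∈ Finset.range n, b i) / b 0) := by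
      rw [Real.log_div hSn1.ne' h0.ne', Real.log_div hSn.ne' h0.ne']
      have hx : (0:ℝ) < (∑ i ∈ Finset.range n, b i) / (∑ i ∈ Finset.range (n+1), b i) :=
        div_pos hSn hSn1
      have := Real.log_le_sub_one_of_pos hx
      rw [Real.log_div hSn.ne' hSn1.ne'] at this
      have h2 : (∑ i ∈ Finset.range n, b i) / (∑ i ∈ Finset.range (n+1), b i) - 1
          = - (b n / (∑ i ∈ Finset.range (n+1), b i)) := by
        rw [Finset.sum_range_succ] at hSn1 ⊢
        field_simp
        ring
      rw [h2] at this
      linarith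
    linarith [ih hn']

/-- Azar et al. prefix-sum inequality: for nonnegative reals `a 0, ..., a (m-1)`
with `a 0 > 0`, the sum of `a i` divided by the prefix sum `a 0 + ... + a i`
is at most `1 + ln((a 0 + ... + a (m-1)) / a 0)`. -/
theorem stmt_0 (m : ℕ) (hm : 0 < m) (a : Fin m → ℝ)
    (ha : ∀ i, 0 ≤ a i) (ha1 : 0 < a ⟨0, hm⟩) :
    ∑ i : Fin m, a i / (∑ j ∈ Finset.Iic i, a j) ≤
      1 + Real.log ((∑ i : Fin m, a i) / a ⟨0, hm⟩) := by
  set b : ℕ → ℝ := fun n => if h : n < m then a ⟨n, h⟩ else 0 with hb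
  have hbnn : ∀ i, 0 ≤ b i := by
    intro i; simp only [hb]; split
    · exact ha _
    · exact le_refl 0
  have hb0 : b 0 = a ⟨0, hm⟩ := by simp [hb, hm]
  have hinner : ∀ i : Fin m, ∑ j ∈ Finset.Iic i, a j = ∑ j ∈ Finset.range (i+1), b j := by
    intro i
    have h1 : Finset.range ((i:ℕ)+1) = Finset.Iic (i:ℕ) := by ext x; simp [Nat.lt_succ_iff]
    have h2 : ∀ j : Fin m, a j = b j.val := by
      intro j; simp [hb, j.isLt]
    rw [h1, ← Fin.map_valEmbedding_Iic, Finset.sum_map]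
    exact Finset.sum_congr rfl fun j _ => h2 j
  have htot : ∑ i : Fin m, a i = ∑ i ∈ Finset.range m, b i := by
    rw [← Fin.sum_univ_eq_sum_range]
    exact Finset.sum_congr rfl fun j _ => by simp [hb, j.isLt]
  have houter : ∑ i : Fin m, a i / (∑ j ∈ Finset.Iic i, a j) =
      ∑ i ∈ Finset.range m, b i / (∑ j ∈ Finset.range (i+1), b j) := by
    rw [← Fin.sum_univ_eq_sum_range]
    refine Finset.sum_congr rfl fun i _ => ?_
    rw [hinner i]
    congr 1
    simp [hb, i.isLt]
  rw [houter, htot, ← hb0]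
  exact aux_prefix_sum b hbnn (hb0 ▸ ha1) m hm
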